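/- The set U of quadruples (x₁, n₁, x₂, n₂) with (x₁, n₁), (x₂, n₂) ∈ M₃ and such that the three vectors x₂ - x₁, n₁, n₂ are linearly independent in ℝ³ is an open and dense subset of M₃ × M₃ (with M₃ × M₃ carrying the subspace topology inherited from ℝ³ × ℝ³ × ℝ³ × ℝ³). -/

import Mathlib

/-- Three-dimensional position-orientation space `M₃ = {(x, n) ∈ ℝ³ × ℝ³ | ‖n‖ = 1}`,
topologized as a subspace of `ℝ³ × ℝ³`. -/
abbrev M3 : Type :=
  {p : EuclideanSpace ℝ (Fin 3) × EuclideanSpace ℝ (Fin 3) // ‖p.2‖ = 1}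


open Submodule Module

local notation "E3" => EuclideanSpace ℝ (Fin 3)

lemma exists_not_mem_span_pair (a b : EuclideanSpace ℝ (Fin 3)) :
    ∃ v, v ∉ Submodule.span ℝ ({a, b} : Set (EuclideanSpace ℝ (Fin 3))) := by
  by_contra h
  push_neg at h
  have htop : Submodule.span ℝ ({a, b} : Set (EuclideanSpace ℝ (Fin 3))) = ⊤ :=
    eq_top_iff.2 fun x _ => h x
  classical
  have hle := finrank_span_le_card (R := ℝ) ({a, b} : Set (EuclideanSpace ℝ (Fin 3)))
  rw [htop] at hle
  have hc : ({a, b} : Set (EuclideanSpace ℝ (Fin 3))).toFinset.card ≤ 2 := by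
    rw [Set.toFinset_insert, Set.toFinset_singleton]
    exact (Finset.card_insert_le _ _).trans (by simp)
  have h3 : finrank ℝ ((⊤ : Submodule ℝ (EuclideanSpace ℝ (Fin 3)))) = 3 := by
    simp [finrank_top, finrank_euclideanSpace]
  omega

lemma sphere_perturb (n₁ n₂ : EuclideanSpace ℝ (Fin 3)) (h₂ : ‖n₂‖ = 1)
    (ε : ℝ) (hε : 0 < ε) :
    ∃ n₂' : EuclideanSpace ℝ (Fin 3), ‖n₂'‖ = 1 ∧ ‖n₂' - n₂‖ < ε ∧
      n₂' ∉ Submodule.span ℝ ({n₁} : Set (EuclideanSpace ℝ (Fin 3))) := by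
  by_cases h : n₂ ∈ Submodule.span ℝ ({n₁} : Set (EuclideanSpace ℝ (Fin 3)))
  · obtain ⟨v, hv⟩ := exists_not_mem_span_pair n₁ n₁
    rw [Set.pair_eq_singleton] at hv
    -- continuity of t ↦ ‖n₂ + t • v‖⁻¹ • (n₂ + t • v) at 0
    have hcont1 : Continuous fun t : ℝ => n₂ + t • v := by continuity
    have hnorm : ContinuousAt (fun t : ℝ => ‖n₂ + t • v‖) 0 := (hcont1.norm).continuousAt
    have hval : ‖n₂ + (0:ℝ) • v‖ = 1 := by simpa using h₂
    have hg : ContinuousAt (fun t : ℝ => ‖n₂ + t • v‖⁻¹ • (n₂ + t • v)) 0 := by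
      refine ContinuousAt.smul (f := fun t : ℝ => ‖n₂ + t • v‖⁻¹) (g := fun t : ℝ => n₂ + t • v) ?_ ?_
      · exact hnorm.inv₀ (by rw [hval]; exact one_ne_zero)
      · exact hcont1.continuousAt
    have hg0 : ‖n₂ + (0:ℝ) • v‖⁻¹ • (n₂ + (0:ℝ) • v) = n₂ := by
      rw [hval]; simp
    rw [Metric.continuousAt_iff] at hg hnorm
    obtain ⟨δ₁, hδ₁, H₁⟩ := hg ε hε
    obtain ⟨δ₂, hδ₂, H₂⟩ := hnorm (1/2) (by norm_num)
    set t : ℝ := min δ₁ δ₂ / 2 with ht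
    have ht0 : 0 < t := by positivity
    have htδ₁ : dist t 0 < δ₁ := by
      rw [Real.dist_eq, sub_zero, abs_of_pos ht0]
      calc min δ₁ δ₂ / 2 ≤ δ₁ / 2 := by gcongr; exact min_le_left _ _
        _ < δ₁ := by linarith
    have htδ₂ : dist t 0 < δ₂ := by
      rw [Real.dist_eq, sub_zero, abs_of_pos ht0]
      calc min δ₁ δ₂ / 2 ≤ δ₂ / 2 := by gcongr; exact min_le_right _ _
        _ < δ₂ := by linarith
    have hmnorm : ‖n₂ + t • v‖ ≠ 0 := by
      have := H₂ htδ₂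
      rw [Real.dist_eq] at this
      simp only [hval] at this
      intro h0
      rw [h0] at this
      norm_num at this
    refine ⟨‖n₂ + t • v‖⁻¹ • (n₂ + t • v), ?_, ?_, ?_⟩
    · rw [norm_smul, norm_inv, norm_norm, inv_mul_cancel₀ hmnorm]
    · have := H₁ htδ₁
      rwa [hg0, dist_eq_norm] at this
    · intro hmem
      have hm : n₂ + t • v ∈ Submodule.span ℝ ({n₁} : Set (EuclideanSpace ℝ (Fin 3))) := by
        have := Submodule.smul_mem _ ‖n₂ + t • v‖ hmem
        rwa [smul_smul, mul_inv_cancel₀ hmnorm, one_smul] at this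
      have : v ∈ Submodule.span ℝ ({n₁} : Set (EuclideanSpace ℝ (Fin 3))) := by
        have hsub : t • v ∈ Submodule.span ℝ ({n₁} : Set (EuclideanSpace ℝ (Fin 3))) := by
          have := Submodule.sub_mem _ hm h
          simpa using this
        have := Submodule.smul_mem _ t⁻¹ hsub
        rwa [smul_smul, inv_mul_cancel₀ ht0.ne', one_smul] at this
      exact hv this
  · exact ⟨n₂, h₂, by simpa using hε, h⟩

/-- The set of pairs `((x₁, n₁), (x₂, n₂)) ∈ M₃ × M₃` such that `x₂ - x₁, n₁, n₂` are
linearly independent (hence form a basis of `ℝ³`) is open and dense in `M₃ × M₃`. -/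
theorem independent_set_open_dense :
    IsOpen {p : M3 × M3 |
        LinearIndependent ℝ ![p.2.1.1 - p.1.1.1, p.1.1.2, p.2.1.2]} ∧
    Dense {p : M3 × M3 |
        LinearIndependent ℝ ![p.2.1.1 - p.1.1.1, p.1.1.2, p.2.1.2]} := by
  constructor
  · have hcont : Continuous fun p : M3 × M3 => ![p.2.1.1 - p.1.1.1, p.1.1.2, p.2.1.2] := by
      refine continuous_pi fun i => ?_
      fin_cases i <;> simp <;> fun_prop
    exact isOpen_setOf_linearIndependent.preimage hcont
  · rw [Metric.dense_iff]
    rintro ⟨⟨⟨x₁, n₁⟩, h₁⟩, ⟨⟨x₂, n₂⟩, h₂⟩⟩ r hr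
    obtain ⟨n₂', hn'1, hn'2, hn'3⟩ := sphere_perturb n₁ n₂ h₂ (r / 2) (by linarith)
    obtain ⟨v, hv⟩ := exists_not_mem_span_pair n₁ n₂'
    set S := Submodule.span ℝ ({n₁, n₂'} : Set (EuclideanSpace ℝ (Fin 3))) with hS
    have key : ∃ x₂' : EuclideanSpace ℝ (Fin 3), ‖x₂' - x₂‖ < r / 2 ∧ x₂' - x₁ ∉ S := by
      by_cases hx : x₂ - x₁ ∈ S
      · set t : ℝ := r / (2 * (‖v‖ + 1)) with htdef
        have ht0 : 0 < t := by positivity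
        refine ⟨x₂ + t • v, ?_, ?_⟩
        · rw [add_sub_cancel_left, norm_smul, Real.norm_eq_abs, abs_of_pos ht0]
          have hv1 : 0 ≤ ‖v‖ := norm_nonneg v
          rw [htdef, div_mul_eq_mul_div, div_lt_iff₀ (by positivity)]
          nlinarith
        · intro hmem
          have hsub : t • v ∈ S := by
            have := S.sub_mem hmem hx
            have heq : x₂ + t • v - x₁ - (x₂ - x₁) = t • v := by abel
            rwa [heq] at this
          have := S.smul_mem t⁻¹ hsub
          rw [smul_smul, inv_mul_cancel₀ ht0.ne', one_smul] at this
          exact hv this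
      · exact ⟨x₂, by simpa using (by linarith : (0:ℝ) < r / 2), hx⟩
    obtain ⟨x₂', hx1, hx2⟩ := key
    refine ⟨(⟨(x₁, n₁), h₁⟩, ⟨(x₂', n₂'), hn'1⟩), ?_, ?_⟩
    · rw [Metric.mem_ball, Prod.dist_eq]
      apply max_lt
      · simpa using hr
      · rw [Subtype.dist_eq, Prod.dist_eq]
        apply max_lt
        · rw [dist_eq_norm]; linarith
        · rw [dist_eq_norm]; linarith
    · show LinearIndependent ℝ ![x₂' - x₁, n₁, n₂']
      have h1 : LinearIndependent ℝ ![n₁, n₂'] := by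
        rw [linearIndependent_fin2]
        refine ⟨?_, ?_⟩
        · show n₂' ≠ 0
          intro h0
          rw [h0, norm_zero] at hn'1
          norm_num at hn'1
        · intro a ha
          simp only [Matrix.cons_val_one, Matrix.head_cons, Matrix.cons_val_zero] at ha
          have ha0 : a ≠ 0 := by
            intro h0
            rw [h0, zero_smul] at ha
            rw [← ha] at h₁
            simp at h₁
          apply hn'3
          rw [Submodule.mem_span_singleton]
          exact ⟨a⁻¹, by rw [← ha, smul_smul, inv_mul_cancel₀ ha0, one_smul]⟩
      have h2 : x₂' - x₁ ∉ Submodule.span ℝ (Set.range ![n₁, n₂']) := by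
        have hr : Set.range ![n₁, n₂'] = {n₁, n₂'} := by
          simp [Matrix.range_cons, Matrix.range_empty, Set.pair_comm n₂' n₁]
        rw [hr]
        exact hx2
      exact h1.fin_cons h2
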